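/- arXiv:0811.1525 — 2 statements merged into one kernel-verified Lean document; each statement's English description precedes it below -/
import Mathlib

section
/- Let P ⊆ ℝⁿ be a discrete point set with conv(P) = ℝⁿ. Then every Voronoi cell of P is a polytope. -/
open scoped RealInnerProductSpace
open Set

noncomputable section

abbrev E (n : ℕ) := EuclideanSpace ℝ (Fin n)

/-- `P` is discrete: every bounded set contains only finitely many points of `P`. -/
def IsDiscretePointSet {n : ℕ} (P : Set (E n)) : Prop :=
  ∀ B : Set (E n), Bornology.IsBounded B → (P ∩ B).Finite

/-- The Voronoi cell of `p` relative to `P`. -/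
def voronoiCell {n : ℕ} (P : Set (E n)) (p : E n) : Set (E n) :=
  {x | ∀ q ∈ P, dist x p ≤ dist x q}

/-- A polyhedron: a finite intersection of closed half-spaces. -/
def IsPolyhedron {n : ℕ} (S : Set (E n)) : Prop :=
  ∃ (k : ℕ) (y : Fin k → E n) (α : Fin k → ℝ),
    S = ⋂ i, {x : E n | (inner ℝ x (y i) : ℝ) ≤ α i}

/-- A polytope: a bounded polyhedron. -/
def IsPolytope {n : ℕ} (S : Set (E n)) : Prop :=
  IsPolyhedron S ∧ Bornology.IsBounded S

/-- The half-space of points at least as close to `p` as to `q`. -/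
def halfSpace {n : ℕ} (p q : E n) : Set (E n) :=
  {x : E n | (inner ℝ (x - p) (q - p) : ℝ) ≤ (1/2) * ‖q - p‖^2}

/-- The conic hull: all nonnegative combinations of finitely many elements of `M`. -/
def coneHull {n : ℕ} (M : Set (E n)) : Set (E n) :=
  {x | ∃ (k : ℕ) (v : Fin k → E n) (c : Fin k → ℝ),
    (∀ i, v i ∈ M) ∧ (∀ i, 0 ≤ c i) ∧ x = ∑ i, c i • v i}

/-- The direction cone of `p`: the conic hull of `P - p`. -/
def dirCone {n : ℕ} (P : Set (E n)) (p : E n) : Set (E n) :=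
  coneHull ((fun q => q - p) '' P)

/-- A cone is finitely generated if it is the conic hull of finitely many vectors. -/
def FinitelyGeneratedCone {n : ℕ} (C : Set (E n)) : Prop :=
  ∃ (k : ℕ) (v : Fin k → E n), C = coneHull (Set.range v)

/-- `q` is Voronoi relevant for `p`: dropping `halfSpace p q` strictly enlarges the
intersection defining the Voronoi cell. -/
def VoronoiRelevant {n : ℕ} (P : Set (E n)) (p q : E n) : Prop :=
  (⋂ r ∈ P \ {p}, halfSpace p r) ⊂ ⋂ r ∈ P \ {p, q}, halfSpace p r

lemma mem_halfSpace_iff {n : ℕ} {p q x : E n} :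
    x ∈ halfSpace p q ↔ dist x p ≤ dist x q := by
  have hxq : x - q = (x - p) - (q - p) := by abel
  have hexp : ‖x - q‖^2 = ‖x - p‖^2 - 2 * (inner ℝ (x-p) (q-p) : ℝ) + ‖q - p‖^2 := by
    rw [hxq]; exact norm_sub_sq_real _ _
  rw [dist_eq_norm, dist_eq_norm]
  constructor
  · intro h
    simp only [halfSpace, mem_setOf_eq] at h
    nlinarith [norm_nonneg (x - p), norm_nonneg (x - q)]
  · intro h
    simp only [halfSpace, mem_setOf_eq]
    nlinarith [norm_nonneg (x - p), norm_nonneg (x - q)]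

lemma isClosed_voronoiCell {n : ℕ} (P : Set (E n)) (p : E n) :
    IsClosed (voronoiCell P p) := by
  have : voronoiCell P p = ⋂ q ∈ P, {x | dist x p ≤ dist x q} := by
    ext x; simp [voronoiCell]
  rw [this]
  exact isClosed_biInter fun q _ =>
    isClosed_le (Continuous.dist continuous_id continuous_const)
      (Continuous.dist continuous_id continuous_const)

lemma exists_pos_inner {n : ℕ} {P : Set (E n)} (hconv : convexHull ℝ P = Set.univ)
    (p : E n) {u : E n} (hu : u ≠ 0) : ∃ q ∈ P, (0:ℝ) < inner ℝ u (q - p) := by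
  by_contra h
  push_neg at h
  have hlin : IsLinearMap ℝ (fun z : E n => (inner ℝ u z : ℝ)) :=
    ⟨fun a b => inner_add_right _ _ _, fun r a => real_inner_smul_right _ _ _⟩
  have hsub : P ⊆ {z : E n | (inner ℝ u z : ℝ) ≤ inner ℝ u p} := by
    intro q hq
    have h1 := h q hq
    rw [mem_setOf_eq]
    have h2 : (inner ℝ u q : ℝ) - inner ℝ u p ≤ 0 := by rw [← inner_sub_right]; exact h1
    linarith
  have hmin : convexHull ℝ P ⊆ {z : E n | (inner ℝ u z : ℝ) ≤ inner ℝ u p} :=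
    convexHull_min hsub (convex_halfSpace_le hlin _)
  rw [hconv] at hmin
  have hpu := hmin (mem_univ (p + u))
  simp only [mem_setOf_eq, inner_add_right, real_inner_self_eq_norm_sq] at hpu
  have hn : 0 < ‖u‖ := norm_pos_iff.2 hu
  have : 0 < ‖u‖^2 := by positivity
  linarith

lemma exists_finset_eps {n : ℕ} {P : Set (E n)} (hconv : convexHull ℝ P = Set.univ)
    (p : E n) :
    ∃ (F : Finset (E n)) (ε : ℝ), ↑F ⊆ P ∧ 0 < ε ∧
      ∀ u : E n, ‖u‖ = 1 → ∃ q ∈ F, ε ≤ (inner ℝ u (q - p) : ℝ) := by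
  classical
  set U : P × ℕ → Set (E n) :=
    fun z => {u | (1:ℝ)/(z.2+1) < inner ℝ u ((z.1 : E n) - p)} with hU
  have hUo : ∀ z, IsOpen (U z) := fun z =>
    isOpen_lt continuous_const (Continuous.inner continuous_id continuous_const)
  have hcover : Metric.sphere (0 : E n) 1 ⊆ ⋃ z, U z := by
    intro u hu
    have hu1 : ‖u‖ = 1 := by simpa using hu
    have hu0 : u ≠ 0 := by intro h0; rw [h0] at hu1; simp at hu1
    obtain ⟨q, hqP, hqpos⟩ := exists_pos_inner hconv p hu0
    obtain ⟨m, hm⟩ := exists_nat_one_div_lt hqpos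
    exact mem_iUnion.2 ⟨(⟨q, hqP⟩, m), by simpa [hU] using hm⟩
  obtain ⟨t, ht⟩ := (isCompact_sphere (0 : E n) 1).elim_finite_subcover U hUo hcover
  refine ⟨t.image (fun z => (z.1.1 : E n)), 1/(t.sup Prod.snd + 1), ?_, by positivity, ?_⟩
  · intro q hq
    simp only [Finset.coe_image, mem_image] at hq
    obtain ⟨z, _, rfl⟩ := hq
    exact z.1.2
  · intro u hu1
    have hu : u ∈ Metric.sphere (0 : E n) 1 := by simpa using hu1
    obtain ⟨z, hzt, hz⟩ := mem_iUnion₂.1 (ht hu)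
    refine ⟨(z.1 : E n), Finset.mem_image.2 ⟨z, hzt, rfl⟩, ?_⟩
    have hle : (1:ℝ)/(t.sup Prod.snd + 1) ≤ 1/(z.2 + 1) := by
      have : (z.2 : ℝ) ≤ t.sup Prod.snd := by
        exact_mod_cast Finset.le_sup (f := Prod.snd) hzt
      apply one_div_le_one_div_of_le <;> [positivity; linarith]
    exact hle.trans (le_of_lt hz)

lemma voronoiCell_subset_ball {n : ℕ} {P : Set (E n)} (hconv : convexHull ℝ P = Set.univ)
    (p : E n) : ∃ R : ℝ, 0 ≤ R ∧ voronoiCell P p ⊆ Metric.closedBall p R := by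
  obtain ⟨F, ε, hFP, hε, hF⟩ := exists_finset_eps hconv p
  obtain ⟨M, hM⟩ := (F.image (fun q => ‖q - p‖)).bddAbove
  set M' : ℝ := max M 0 with hM'
  have hMle : ∀ q ∈ F, ‖q - p‖ ≤ M' := fun q hq =>
    le_trans (hM (Finset.mem_coe.2 (Finset.mem_image_of_mem _ hq))) (le_max_left _ _)
  refine ⟨M'^2/(2*ε), by positivity, ?_⟩
  intro x hx
  rw [Metric.mem_closedBall]
  rcases eq_or_ne x p with rfl | hxp
  · simp; positivity
  · have hxp0 : (0:ℝ) < ‖x - p‖ := norm_pos_iff.2 (sub_ne_zero.2 hxp)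
    set u : E n := ‖x - p‖⁻¹ • (x - p) with hu
    have hu1 : ‖u‖ = 1 := by
      rw [hu, norm_smul, norm_inv, norm_norm, inv_mul_cancel₀ (ne_of_gt hxp0)]
    obtain ⟨q, hqF, hq⟩ := hF u hu1
    have hinner : (inner ℝ u (q - p) : ℝ) = ‖x - p‖⁻¹ * inner ℝ (x - p) (q - p) := by
      rw [hu, real_inner_smul_left]
    have hcell : (inner ℝ (x - p) (q - p) : ℝ) ≤ (1/2) * ‖q - p‖^2 :=
      mem_halfSpace_iff.2 (hx q (hFP hqF))
    have hqM : ‖q - p‖ ≤ M' := hMle q hqF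
    have h0M : (0:ℝ) ≤ M' := le_max_right _ _
    have key : ε * ‖x - p‖ ≤ (1/2) * M'^2 := by
      have h1 : ε ≤ ‖x - p‖⁻¹ * inner ℝ (x - p) (q - p) := by rw [← hinner]; exact hq
      have h2 : ε * ‖x - p‖ ≤ inner ℝ (x - p) (q - p) := by
        have := mul_le_mul_of_nonneg_right h1 (le_of_lt hxp0)
        rwa [mul_comm ‖x - p‖⁻¹ _, mul_assoc, inv_mul_cancel₀ (ne_of_gt hxp0), mul_one] at this
      nlinarith [pow_le_pow_left₀ (norm_nonneg (q - p)) hqM 2]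
    rw [dist_eq_norm, le_div_iff₀ (by positivity : (0:ℝ) < 2*ε)]
    nlinarith

lemma voronoiCell_eq_finite_inter {n : ℕ} {P : Set (E n)} (p : E n)
    {R : ℝ} (hR0 : 0 ≤ R) (hR : voronoiCell P p ⊆ Metric.closedBall p R) :
    voronoiCell P p = ⋂ q ∈ P ∩ Metric.closedBall p (4*R+2), halfSpace p q := by
  apply Subset.antisymm
  · intro x hx
    exact mem_iInter₂.2 fun q hq => mem_halfSpace_iff.2 (hx q hq.1)
  · intro x hx
    have hxH : ∀ q ∈ P ∩ Metric.closedBall p (4*R+2), x ∈ halfSpace p q := mem_iInter₂.1 hx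
    rcases eq_or_ne x p with rfl | hxp
    · intro q hq; simp only [dist_self]; exact dist_nonneg
    have hxp0 : (0:ℝ) < ‖x - p‖ := norm_pos_iff.2 (sub_ne_zero.2 hxp)
    set T : Set ℝ := {t : ℝ | t ∈ Icc (0:ℝ) 1 ∧ p + t • (x - p) ∈ voronoiCell P p} with hT
    have hTc : IsClosed T := by
      apply IsClosed.inter isClosed_Icc
      exact IsClosed.preimage
        (Continuous.add continuous_const (Continuous.smul continuous_id continuous_const))
        (isClosed_voronoiCell P p)
    have hT0 : (0:ℝ) ∈ T := by
      constructor
      · exact ⟨le_refl 0, zero_le_one⟩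
      · simp only [zero_smul, add_zero]
        intro q hq; simp [dist_nonneg]
    have hTne : T.Nonempty := ⟨0, hT0⟩
    have hTbdd : BddAbove T := ⟨1, fun t ht => ht.1.2⟩
    set t₀ : ℝ := sSup T with ht₀
    have ht₀T : t₀ ∈ T := hTc.csSup_mem hTne hTbdd
    have ht₀0 : 0 ≤ t₀ := ht₀T.1.1
    have ht₀1 : t₀ ≤ 1 := ht₀T.1.2
    set y : E n := p + t₀ • (x - p) with hy
    have hycell : y ∈ voronoiCell P p := ht₀T.2
    have hynorm : t₀ * ‖x - p‖ ≤ R := by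
      have := hR hycell
      rw [Metric.mem_closedBall, dist_eq_norm] at this
      rw [hy] at this
      rwa [add_sub_cancel_left, norm_smul, Real.norm_eq_abs, abs_of_nonneg ht₀0] at this
    rcases eq_or_lt_of_le ht₀1 with h1 | ht₀lt
    · have hx1 : p + (1:ℝ) • (x - p) ∈ voronoiCell P p := by rw [← h1]; exact hycell
      simpa using hx1
    -- t₀ < 1
    set t' : ℝ := min 1 (t₀ + (R+1)/‖x - p‖) with ht'
    have ht'0 : 0 ≤ t' := le_min zero_le_one (by positivity)
    have ht'1 : t' ≤ 1 := min_le_left _ _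
    have hdiv : (0:ℝ) < (R+1)/‖x - p‖ := by positivity
    have ht'gt : t₀ < t' := lt_min ht₀lt (by linarith)
    set y' : E n := p + t' • (x - p) with hy'
    have hy'norm : ‖y' - p‖ ≤ 2*R + 1 := by
      rw [hy', add_sub_cancel_left, norm_smul, Real.norm_eq_abs, abs_of_nonneg ht'0]
      have h2 : t' ≤ t₀ + (R+1)/‖x - p‖ := min_le_right _ _
      have h3 : t' * ‖x - p‖ ≤ t₀ * ‖x - p‖ + (R+1) := by
        have := mul_le_mul_of_nonneg_right h2 (le_of_lt hxp0)
        rwa [add_mul, div_mul_cancel₀ _ (ne_of_gt hxp0)] at this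
      linarith
    have hy'not : y' ∉ voronoiCell P p := by
      intro hmem
      have : t' ∈ T := ⟨⟨ht'0, ht'1⟩, hmem⟩
      exact absurd (le_csSup hTbdd this) (not_le.2 ht'gt)
    simp only [voronoiCell, mem_setOf_eq, not_forall] at hy'not
    obtain ⟨q, hqP, hqlt⟩ := hy'not
    have hy'q : y' ∉ halfSpace p q := fun hh => hqlt (mem_halfSpace_iff.1 hh)
    rw [halfSpace, mem_setOf_eq, not_le] at hy'q
    have hqp : q ≠ p := by
      intro h; rw [h] at hy'q; simp at hy'q
    have hqp0 : (0:ℝ) < ‖q - p‖ := norm_pos_iff.2 (sub_ne_zero.2 hqp)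
    have hcs : (inner ℝ (y' - p) (q - p) : ℝ) ≤ ‖y' - p‖ * ‖q - p‖ := real_inner_le_norm _ _
    have hqnear : ‖q - p‖ ≤ 4*R + 2 := by nlinarith
    have hqmem : q ∈ P ∩ Metric.closedBall p (4*R+2) :=
      ⟨hqP, by rw [Metric.mem_closedBall, dist_eq_norm]; exact hqnear⟩
    have hxq := hxH q hqmem
    rw [halfSpace, mem_setOf_eq] at hxq
    have hy'in : (inner ℝ (y' - p) (q - p) : ℝ) = t' * inner ℝ (x - p) (q - p) := by
      rw [hy', add_sub_cancel_left, real_inner_smul_left]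
    have hc0 : (0:ℝ) ≤ (1/2) * ‖q - p‖^2 := by positivity
    rw [hy'in] at hy'q
    nlinarith

lemma isPolyhedron_biInter {n : ℕ} (p : E n) {G : Set (E n)} (hG : G.Finite) :
    IsPolyhedron (⋂ q ∈ G, halfSpace p q) := by
  classical
  set k := hG.toFinset.card with hk
  set e : {x // x ∈ hG.toFinset} ≃ Fin k := hG.toFinset.equivFin with he
  refine ⟨k, fun i => ((e.symm i : E n) - p),
    fun i => (1/2) * ‖(e.symm i : E n) - p‖^2 + inner ℝ p ((e.symm i : E n) - p), ?_⟩
  ext x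
  simp only [mem_iInter, mem_setOf_eq]
  constructor
  · intro h i
    have hq : ((e.symm i : E n)) ∈ G := hG.mem_toFinset.1 (e.symm i).2
    have h2 := h _ hq
    rw [halfSpace, mem_setOf_eq, inner_sub_left] at h2
    linarith
  · intro h
    intro q hq
    have hq' : q ∈ hG.toFinset := hG.mem_toFinset.2 hq
    have h2 := h (e ⟨q, hq'⟩)
    rw [Equiv.symm_apply_apply] at h2
    rw [halfSpace, mem_setOf_eq, inner_sub_left]
    simp only at h2
    linarith

theorem stmt7 {n : ℕ} (P : Set (E n)) (hP : IsDiscretePointSet P)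
    (hconv : convexHull ℝ P = Set.univ) :
    ∀ p ∈ P, IsPolytope (voronoiCell P p) := by
  intro p hp
  obtain ⟨R, hR0, hR⟩ := voronoiCell_subset_ball hconv p
  have hGfin : (P ∩ Metric.closedBall p (4*R+2)).Finite :=
    hP _ Metric.isBounded_closedBall
  constructor
  · rw [voronoiCell_eq_finite_inter p hR0 hR]
    exact isPolyhedron_biInter p hGfin
  · exact Metric.isBounded_closedBall.subset hR
end
end

section
/- Let P ⊆ ℝⁿ be a discrete point set and p ∈ P a boundary point of conv(P). If the direction cone C(p) = cone(P − p) is not closed, then V(p) is not a polyhedron. -/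
open scoped RealInnerProductSpace
open Set

noncomputable section

variable {n : ℕ}

lemma mem_coneHull_self {M : Set (E n)} {x : E n} (h : x ∈ M) : x ∈ coneHull M :=
  ⟨1, fun _ => x, fun _ => 1, fun _ => h, fun _ => zero_le_one, by simp⟩

lemma coneHull_zero_mem (M : Set (E n)) : (0 : E n) ∈ coneHull M :=
  ⟨0, ![], ![], fun i => i.elim0, fun i => i.elim0, by simp⟩

lemma coneHull_add_mem {M : Set (E n)} {x y : E n} (hx : x ∈ coneHull M)
    (hy : y ∈ coneHull M) : x + y ∈ coneHull M := by
  obtain ⟨k, v, c, hv, hc, rfl⟩ := hx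
  obtain ⟨l, w, d, hw, hd, rfl⟩ := hy
  refine ⟨k + l, Fin.append v w, Fin.append c d, ?_, ?_, ?_⟩
  · intro i
    refine i.addCases (fun j => ?_) (fun j => ?_)
    · rw [Fin.append_left]; exact hv _
    · rw [Fin.append_right]; exact hw _
  · intro i
    refine i.addCases (fun j => ?_) (fun j => ?_)
    · simpa [Fin.append_left] using hc j
    · simpa [Fin.append_right] using hd j
  · rw [Fin.sum_univ_add]
    simp [Fin.append_left, Fin.append_right]

lemma coneHull_smul_mem {M : Set (E n)} {x : E n} {a : ℝ} (ha : 0 ≤ a)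
    (hx : x ∈ coneHull M) : a • x ∈ coneHull M := by
  obtain ⟨k, v, c, hv, hc, rfl⟩ := hx
  exact ⟨k, v, fun i => a * c i, hv, fun i => mul_nonneg ha (hc i),
    by rw [Finset.smul_sum]; simp [smul_smul]⟩

lemma coneHull_min {M D : Set (E n)} (h : M ⊆ D) (h0 : (0:E n) ∈ D)
    (hadd : ∀ {x y : E n}, x ∈ D → y ∈ D → x + y ∈ D)
    (hsmul : ∀ {a : ℝ} {x : E n}, 0 ≤ a → x ∈ D → a • x ∈ D) :
    coneHull M ⊆ D := by
  rintro x ⟨k, v, c, hv, hc, rfl⟩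
  have : ∀ s : Finset (Fin k), ∑ i ∈ s, c i • v i ∈ D := by
    intro s
    induction s using Finset.induction with
    | empty => simpa using h0
    | insert _ _ hns ih => rw [Finset.sum_insert hns]; exact hadd (hsmul (hc _) (h (hv _))) ih
  exact this Finset.univ

lemma mem_coneHull_range_iff {k : ℕ} (v : Fin k → E n) (x : E n) :
    x ∈ coneHull (Set.range v) ↔ ∃ c : Fin k → ℝ, (∀ i, 0 ≤ c i) ∧ x = ∑ i, c i • v i := by
  classical
  constructor
  · rintro ⟨l, w, c, hw, hc, rfl⟩
    choose f hf using hw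
    refine ⟨fun i => ∑ j ∈ Finset.univ.filter (fun j => f j = i), c j,
      fun i => Finset.sum_nonneg fun j _ => hc j, ?_⟩
    rw [eq_comm]
    calc ∑ i, (∑ j ∈ Finset.univ.filter (fun j => f j = i), c j) • v i
        = ∑ i, ∑ j ∈ Finset.univ.filter (fun j => f j = i), c j • v i := by
          refine Finset.sum_congr rfl fun i _ => ?_
          rw [Finset.sum_smul]
      _ = ∑ i, ∑ j ∈ Finset.univ.filter (fun j => f j = i), c j • w j := by
          refine Finset.sum_congr rfl fun i _ => Finset.sum_congr rfl fun j hj => ?_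
          rw [Finset.mem_filter] at hj
          rw [← hf j, hj.2]
      _ = ∑ j, c j • w j := Finset.sum_fiberwise_of_maps_to (fun j _ => Finset.mem_univ (f j)) _
  · rintro ⟨c, hc, rfl⟩
    exact ⟨k, v, c, fun i => ⟨i, rfl⟩, hc, rfl⟩

lemma cone_cara {k : ℕ} (v : Fin k → E n) :
    ∀ s : Finset (Fin k), ∀ c : Fin k → ℝ, (∀ i, 0 ≤ c i) → (∀ i ∉ s, c i = 0) →
    ∃ t : Finset (Fin k), (LinearIndependent ℝ (fun i : t => v i)) ∧
      ∃ d : Fin k → ℝ, (∀ i, 0 ≤ d i) ∧ (∀ i ∉ t, d i = 0) ∧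
        ∑ i, d i • v i = ∑ i, c i • v i := by
  classical
  intro s
  induction s using Finset.strongInduction with
  | _ s ih =>
    intro c hc hcs
    by_cases hli : LinearIndependent ℝ (fun i : s => v i)
    · exact ⟨s, hli, c, hc, hcs, rfl⟩
    · obtain ⟨g, hgsum, j0, hgj0⟩ := Fintype.not_linearIndependent_iff.mp hli
      set G : Fin k → ℝ := fun i => if h : i ∈ s then g ⟨i, h⟩ else 0 with hG
      have hGattach : ∀ (H : Fin k → ℝ) (hH : ∀ i ∉ s, H i = 0),
          ∑ i, H i • v i = ∑ i ∈ s.attach, H i.1 • v i.1 := by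
        intro H hH
        rw [Finset.sum_attach s (fun i => H i • v i)]
        refine (Finset.sum_subset (Finset.subset_univ s) ?_).symm
        intro i _ hi
        rw [hH i hi, zero_smul]
      have hGs : ∀ i ∉ s, G i = 0 := fun i hi => by simp [hG, hi]
      have hGsum' : ∑ i, G i • v i = 0 := by
        rw [hGattach G hGs]
        rw [← hgsum]
        exact Finset.sum_congr rfl fun i _ => by simp [hG, i.2]
      have hGne : G j0.1 ≠ 0 := by simpa [hG, j0.2] using hgj0
      have hmain : ∃ g' : Fin k → ℝ, (∑ i, g' i • v i = 0) ∧ (∀ i ∉ s, g' i = 0) ∧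
          ∃ i ∈ s, 0 < g' i := by
        by_cases hpos : ∃ i ∈ s, 0 < G i
        · exact ⟨G, hGsum', hGs, hpos⟩
        · push_neg at hpos
          refine ⟨-G, by simpa using hGsum', fun i hi => by simp [hGs i hi], j0.1, j0.2, ?_⟩
          have := hpos j0.1 j0.2
          simp only [Pi.neg_apply]
          cases lt_or_eq_of_le this with
          | inl h => linarith
          | inr h => exact absurd h hGne
      obtain ⟨g', hg'sum, hg's, i1, hi1s, hi1pos⟩ := hmain
      set A := s.filter (fun i => 0 < g' i) with hA
      obtain ⟨i0, hi0A, hi0min⟩ := Finset.exists_min_image A (fun i => c i / g' i)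
        ⟨i1, Finset.mem_filter.mpr ⟨hi1s, hi1pos⟩⟩
      rw [Finset.mem_filter] at hi0A
      obtain ⟨hi0s, hg'i0⟩ := hi0A
      set t0 := c i0 / g' i0 with ht0
      have ht0nn : 0 ≤ t0 := div_nonneg (hc _) hg'i0.le
      set d : Fin k → ℝ := fun i => c i - t0 * g' i with hd
      have hd0 : ∀ i, 0 ≤ d i := by
        intro i
        by_cases hgi : 0 < g' i
        · by_cases his : i ∈ s
          · have hmin := hi0min i (Finset.mem_filter.mpr ⟨his, hgi⟩)
            have : t0 * g' i ≤ c i := by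
              rw [ht0] at hmin ⊢
              rw [le_div_iff₀ hgi] at hmin
              linarith
            simp only [hd]; linarith
          · exact absurd (hg's i his) (ne_of_gt hgi)
        · push_neg at hgi
          have : t0 * g' i ≤ 0 := mul_nonpos_of_nonneg_of_nonpos ht0nn hgi
          have := hc i
          simp only [hd]; linarith
      have hdsupp : ∀ i ∉ s.erase i0, d i = 0 := by
        intro i hi
        rw [Finset.mem_erase] at hi
        push_neg at hi
        by_cases hii : i = i0
        · subst hii
          simp only [hd, ht0]
          rw [div_mul_cancel₀ _ (ne_of_gt hg'i0)]
          ring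
        · have his : i ∉ s := hi hii
          simp [hd, hcs i his, hg's i his]
      have hdsum : ∑ i, d i • v i = ∑ i, c i • v i := by
        simp only [hd, sub_smul]
        rw [Finset.sum_sub_distrib]
        have : ∑ i, (t0 * g' i) • v i = 0 := by
          simp only [mul_smul, ← Finset.smul_sum, hg'sum, smul_zero]
        rw [this, sub_zero]
      obtain ⟨t, hli', d', hd'1, hd'2, hd'3⟩ :=
        ih (s.erase i0) (Finset.erase_ssubset hi0s) d hd0 hdsupp
      exact ⟨t, hli', d', hd'1, hd'2, hd'3.trans hdsum⟩

lemma isClosed_coneHull_finite (M : Set (E n)) (hM : M.Finite) :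
    IsClosed (coneHull M) := by
  classical
  obtain ⟨k, v, -, rfl⟩ := hM.fin_param
  have hrepr : coneHull (Set.range v) =
      ⋃ t : {t : Finset (Fin k) // LinearIndependent ℝ (fun i : t => v i)},
        (fun d : (↥t.1 → ℝ) => ∑ j : ↥t.1, d j • v j) '' {d | ∀ j, 0 ≤ d j} := by
    ext x
    constructor
    · intro hx
      obtain ⟨c, hc, rfl⟩ := (mem_coneHull_range_iff v _).mp hx
      obtain ⟨t, hli, d, hd0, hdsupp, hdsum⟩ := cone_cara v Finset.univ c hc (by simp)
      refine mem_iUnion.mpr ⟨⟨t, hli⟩, ⟨fun j => d j, fun j => hd0 _, ?_⟩⟩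
      show ∑ j : t, d j • v j = ∑ i, c i • v i
      rw [← hdsum, Finset.sum_coe_sort t (fun i => d i • v i)]
      refine Finset.sum_subset (Finset.subset_univ t) ?_
      intro i _ hi
      rw [hdsupp i hi, zero_smul]
    · intro hx
      obtain ⟨tp, d, hd, rfl⟩ := mem_iUnion.mp hx
      obtain ⟨t, hli⟩ := tp
      refine (mem_coneHull_range_iff v _).mpr
        ⟨fun i => if h : i ∈ t then d ⟨i, h⟩ else 0, fun i => ?_, ?_⟩
      · by_cases h : i ∈ t
        · simpa [h] using hd ⟨i, h⟩
        · simp [h]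
      · rw [eq_comm]
        calc ∑ i, (if h : i ∈ t then d ⟨i, h⟩ else 0) • v i
            = ∑ i ∈ t, (if h : i ∈ t then d ⟨i, h⟩ else 0) • v i := by
              refine (Finset.sum_subset (Finset.subset_univ t) ?_).symm
              intro i _ hi; simp [hi]
          _ = ∑ j : t, (if h : (j : Fin k) ∈ t then d ⟨j, h⟩ else 0) • v j :=
              (Finset.sum_coe_sort t _).symm
          _ = ∑ j : t, d j • v j := by
              refine Finset.sum_congr rfl fun j _ => ?_
              simp [j.2]
  rw [hrepr]
  apply isClosed_iUnion_of_finite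
  rintro ⟨t, hli⟩
  let φ : (↥t → ℝ) →ₗ[ℝ] E n :=
    Fintype.linearCombination ℝ (fun j : t => v j)
  have hφ : (fun d : (↥t → ℝ) => ∑ j : ↥t, d j • v j) = ⇑φ := by
    funext d
    rw [Fintype.linearCombination_apply]
  have hker : LinearMap.ker φ = ⊥ := by
    rw [LinearMap.ker_eq_bot']
    intro m hm
    have hm' : ∑ j : t, m j • v j = 0 := (congrFun hφ m).symm ▸ hm
    funext j
    exact Fintype.linearIndependent_iff.mp hli m hm' j
  have hemb := LinearMap.isClosedEmbedding_of_injective hker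
  have horth : IsClosed {d : ↥t → ℝ | ∀ j, 0 ≤ d j} := by
    have : {d : ↥t → ℝ | ∀ j, 0 ≤ d j} = ⋂ j, {d | 0 ≤ d j} := by
      ext d; simp
    rw [this]
    exact isClosed_iInter fun j => isClosed_le continuous_const (continuous_apply j)
  rw [hφ]
  exact hemb.isClosedMap _ horth

lemma dist_sq_expand (x p q : E n) :
    dist x q ^ 2 = dist x p ^ 2 - 2 * ⟪x - p, q - p⟫ + ‖q - p‖ ^ 2 := by
  have h : x - q = (x - p) - (q - p) := by abel
  rw [dist_eq_norm, dist_eq_norm, h, @norm_sub_sq_real]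

lemma dist_le_iff_inner (x p q : E n) :
    dist x p ≤ dist x q ↔ ⟪x - p, q - p⟫ ≤ (1/2) * ‖q - p‖ ^ 2 := by
  have h := dist_sq_expand x p q
  constructor
  · intro hle
    nlinarith [dist_nonneg (x := x) (y := p), dist_nonneg (x := x) (y := q)]
  · intro hle
    nlinarith [dist_nonneg (x := x) (y := p), dist_nonneg (x := x) (y := q)]

lemma dist_lt_iff_inner (x p q : E n) :
    dist x q < dist x p ↔ (1/2) * ‖q - p‖ ^ 2 < ⟪x - p, q - p⟫ := by
  rw [← not_le, ← not_le, not_iff_not, dist_le_iff_inner]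

set_option maxHeartbeats 2000000 in
theorem stmt13 {n : ℕ} (P : Set (E n)) (hP : IsDiscretePointSet P) (p : E n) (hp : p ∈ P)
    (hbd : p ∈ frontier (convexHull ℝ P))
    (hnc : ¬ IsClosed (dirCone P p)) :
    ¬ IsPolyhedron (voronoiCell P p) := by
  classical
  intro hpoly
  obtain ⟨k, y, α, hV⟩ := hpoly
  set V := voronoiCell P p with hVdef
  have hmemV : ∀ x : E n, x ∈ V ↔ ∀ q ∈ P, dist x p ≤ dist x q := fun x => Iff.rfl
  have hpV : p ∈ V := by
    intro q hq
    rw [dist_self]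
    exact dist_nonneg
  -- small ball around p inside V
  obtain ⟨r, hr0, hball⟩ : ∃ r > 0, ∀ x : E n, dist x p ≤ r → x ∈ V := by
    have hfin : (P ∩ Metric.closedBall p 3).Finite := hP _ Metric.isBounded_closedBall
    have hfin2 : ((P ∩ Metric.closedBall p 3) \ {p}).Finite := hfin.diff
    obtain ⟨d, hd0, hdle⟩ : ∃ d > 0, ∀ q ∈ (P ∩ Metric.closedBall p 3) \ {p}, d ≤ dist p q := by
      rcases Set.eq_empty_or_nonempty ((P ∩ Metric.closedBall p 3) \ {p}) with he | hne
      · exact ⟨1, one_pos, fun q hq => by rw [he] at hq; exact absurd hq (notMem_empty q)⟩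
      · obtain ⟨q0, hq0, hq0min⟩ := Set.exists_min_image _ (fun q => dist p q) hfin2 hne
        refine ⟨dist p q0, ?_, fun q hq => hq0min q hq⟩
        rw [gt_iff_lt, dist_pos]
        exact fun h => hq0.2 (by rw [← h]; rfl)
    refine ⟨min (d/2) 1, by positivity, ?_⟩
    intro x hx q hq
    rcases eq_or_ne q p with rfl | hqp
    · exact le_refl _
    have hxp1 : dist x p ≤ 1 := hx.trans (min_le_right _ _)
    have hxpd : dist x p ≤ d/2 := hx.trans (min_le_left _ _)
    by_cases hq3 : dist p q ≤ 3
    · have hqmem : q ∈ (P ∩ Metric.closedBall p 3) \ {p} := by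
        refine ⟨⟨hq, ?_⟩, ?_⟩
        · rw [Metric.mem_closedBall, dist_comm]; exact hq3
        · simp [hqp]
      have hd := hdle q hqmem
      have htri : dist p q ≤ dist p x + dist x q := dist_triangle p x q
      rw [dist_comm p x] at htri
      linarith
    · push_neg at hq3
      have htri : dist p q ≤ dist p x + dist x q := dist_triangle p x q
      rw [dist_comm p x] at htri
      linarith
  -- minimal representation
  set Q : Finset (Fin k) → Prop := fun s => V = ⋂ i ∈ s, {x : E n | ⟪x, y i⟫ ≤ α i} with hQdef
  have hQuniv : Q Finset.univ := by
    simp only [hQdef, Finset.mem_univ, iInter_true]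
    exact hV
  have hSne : {m | ∃ s : Finset (Fin k), Q s ∧ s.card = m}.Nonempty :=
    ⟨Finset.univ.card, Finset.univ, hQuniv, rfl⟩
  obtain ⟨S, hQS, hScard⟩ := Nat.sInf_mem hSne
  have hmin : ∀ s : Finset (Fin k), Q s → S.card ≤ s.card := fun s hs =>
    hScard ▸ Nat.sInf_le ⟨s, hs, rfl⟩
  have hVSmem : ∀ x : E n, x ∈ V ↔ ∀ i ∈ S, ⟪x, y i⟫ ≤ α i := by
    intro x
    rw [show V = ⋂ i ∈ S, {x : E n | ⟪x, y i⟫ ≤ α i} from hQS]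
    simp only [mem_iInter, mem_setOf_eq]
  -- irredundancy witnesses
  have hirr : ∀ i ∈ S, ∃ xi : E n, (∀ j ∈ S.erase i, ⟪xi, y j⟫ ≤ α j) ∧ α i < ⟪xi, y i⟫ := by
    intro i hiS
    by_contra hcon
    push_neg at hcon
    have hQe : Q (S.erase i) := by
      apply Set.Subset.antisymm
      · intro x hx
        have hx' := (hVSmem x).mp hx
        exact mem_iInter₂.mpr fun j hj => hx' j (Finset.mem_of_mem_erase hj)
      · intro x hx
        have hx' : ∀ j ∈ S.erase i, ⟪x, y j⟫ ≤ α j := fun j hj => mem_iInter₂.mp hx j hj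
        refine (hVSmem x).mpr fun j hj => ?_
        rcases eq_or_ne j i with rfl | hji
        · exact hcon x hx'
        · exact hx' j (Finset.mem_erase.mpr ⟨hji, hj⟩)
    have h1 := hmin _ hQe
    have h2 : (S.erase i).card < S.card := Finset.card_erase_lt_of_mem hiS
    omega
  choose xi hxi1 hxi2 using hirr
  have hyne : ∀ i (h : i ∈ S), y i ≠ 0 := by
    intro i h hy0
    have h1 := hxi2 i h
    have h2 : ⟪p, y i⟫ ≤ α i := (hVSmem p).mp hpV i h
    rw [hy0, inner_zero_right] at h1 h2
    linarith
  have hpstrict : ∀ i (h : i ∈ S), ⟪p, y i⟫ < α i := by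
    intro i h
    have hn0 : 0 < ‖y i‖ := norm_pos_iff.mpr (hyne i h)
    set u : E n := p + (r / 2 / ‖y i‖) • y i with hu
    have huV : u ∈ V := by
      apply hball
      have : u - p = (r / 2 / ‖y i‖) • y i := by rw [hu]; abel
      rw [dist_eq_norm, this, norm_smul, Real.norm_eq_abs,
        abs_of_pos (by positivity), div_mul_cancel₀ _ (ne_of_gt hn0)]
      linarith
    have h1 := (hVSmem u).mp huV i h
    rw [hu, inner_add_left, real_inner_smul_left, real_inner_self_eq_norm_sq] at h1
    have h2 : 0 < r / 2 / ‖y i‖ * ‖y i‖ ^ 2 := by positivity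
    linarith
  -- the key step: every minimal-representation normal is a positive multiple of some q - p
  have hyC : ∀ i (hiS : i ∈ S), y i ∈ dirCone P p := by
    intro i hiS
    have hn0 : 0 < ‖y i‖ := norm_pos_iff.mpr (hyne i hiS)
    have hden : 0 < ⟪xi i hiS, y i⟫ - ⟪p, y i⟫ := by
      have h1 := hxi2 i hiS
      have h2 := hpstrict i hiS
      linarith
    set t0 : ℝ := (α i - ⟪p, y i⟫) / (⟪xi i hiS, y i⟫ - ⟪p, y i⟫) with ht0
    have ht0pos : 0 < t0 := div_pos (by linarith [hpstrict i hiS]) hden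
    have ht0lt : t0 < 1 := by
      rw [ht0, div_lt_one hden]
      linarith [hxi2 i hiS]
    set z : E n := p + t0 • (xi i hiS - p) with hz
    have hzinner : ∀ w : E n, ⟪z, w⟫ = ⟪p, w⟫ + t0 * (⟪xi i hiS, w⟫ - ⟪p, w⟫) := by
      intro w
      rw [hz, inner_add_left, real_inner_smul_left, inner_sub_left]
    have hzi : ⟪z, y i⟫ = α i := by
      rw [hzinner, ht0, div_mul_cancel₀ _ (ne_of_gt hden)]
      ring
    have hzj : ∀ j ∈ S.erase i, ⟪z, y j⟫ < α j := by
      intro j hj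
      have hjS := Finset.mem_of_mem_erase hj
      have h1 := hpstrict j hjS
      have h2 := hxi1 i hiS j hj
      rw [hzinner]
      nlinarith
    have hzV : z ∈ V := (hVSmem z).mpr (fun j hj => by
      rcases eq_or_ne j i with rfl | hne
      · exact le_of_eq hzi
      · exact (hzj j (Finset.mem_erase.mpr ⟨hne, hj⟩)).le)
    obtain ⟨ε, hε0, hεprop⟩ :
        ∃ ε > 0, ∀ w : E n, ‖w‖ < ε → ∀ j ∈ S.erase i, ⟪z + w, y j⟫ ≤ α j := by
      have hopen : IsOpen (⋂ j ∈ S.erase i, {w : E n | ⟪z + w, y j⟫ < α j}) :=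
        isOpen_biInter_finset (fun j _ => isOpen_lt
          (Continuous.inner (continuous_const.add continuous_id) continuous_const)
          continuous_const)
      have hmem0 : (0 : E n) ∈ ⋂ j ∈ S.erase i, {w : E n | ⟪z + w, y j⟫ < α j} :=
        mem_iInter₂.mpr (fun j hj => by simpa using hzj j hj)
      obtain ⟨ε, hε0, hball'⟩ := Metric.isOpen_iff.mp hopen 0 hmem0
      refine ⟨ε, hε0, fun w hw j hj => ?_⟩
      have hwb : w ∈ Metric.ball (0 : E n) ε := by rwa [Metric.mem_ball, dist_zero_right]
      exact (mem_iInter₂.mp (hball' hwb) j hj).le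
    set δ : ℝ := min (ε / (‖y i‖ + 1)) 1 with hδ
    have hδ0 : 0 < δ := lt_min (by positivity) one_pos
    set w : ℕ → E n := fun m => z + (δ / (m + 1)) • y i with hw
    have hs0 : ∀ m : ℕ, 0 < δ / (m + 1 : ℝ) := fun m => by positivity
    have hsδ : ∀ m : ℕ, δ / (m + 1 : ℝ) ≤ δ := by
      intro m
      rw [div_le_iff₀ (by positivity)]
      nlinarith [(Nat.cast_nonneg m : (0:ℝ) ≤ (m:ℝ))]
    have hwz : ∀ m : ℕ, dist (w m) z ≤ δ * ‖y i‖ := by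
      intro m
      have hwmz : w m - z = (δ / (m + 1)) • y i := by rw [hw]; exact add_sub_cancel_left z _
      rw [dist_eq_norm, hwmz, norm_smul, Real.norm_eq_abs, abs_of_pos (hs0 m)]
      have h1 := hsδ m
      nlinarith
    have hwnotV : ∀ m : ℕ, w m ∉ V := by
      intro m hmem
      have h1 := (hVSmem _).mp hmem i hiS
      rw [hw] at h1
      simp only [inner_add_left, real_inner_smul_left] at h1
      rw [hzi, real_inner_self_eq_norm_sq] at h1
      have := mul_pos (hs0 m) (pow_pos hn0 2)
      linarith
    set R : ℝ := dist z p + 2 * δ * ‖y i‖ + 1 with hR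
    have hq_ex : ∀ m : ℕ, ∃ q : E n,
        (q ∈ P ∩ Metric.closedBall z R) ∧ dist (w m) q < dist (w m) p := by
      intro m
      have hnot : ¬ (∀ q ∈ P, dist (w m) p ≤ dist (w m) q) := hwnotV m
      push_neg at hnot
      obtain ⟨q, hqP, hqlt⟩ := hnot
      refine ⟨q, ⟨hqP, ?_⟩, hqlt⟩
      rw [Metric.mem_closedBall]
      have t1 : dist q z ≤ dist q (w m) + dist (w m) z := dist_triangle q (w m) z
      have t2 : dist (w m) p ≤ dist (w m) z + dist z p := dist_triangle (w m) z p
      have t3 := hwz m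
      rw [dist_comm q (w m)] at t1
      rw [dist_comm q z] at t1 ⊢
      linarith
    choose qf hqf1 hqf2 using hq_ex
    have hfinB : (P ∩ Metric.closedBall z R).Finite := hP _ Metric.isBounded_closedBall
    have hfinsub : Finite ↥(P ∩ Metric.closedBall z R) := hfinB.to_subtype
    set g : ℕ → ↥(P ∩ Metric.closedBall z R) := fun m => ⟨qf m, hqf1 m⟩ with hg
    obtain ⟨qq, hqq⟩ := Finite.exists_infinite_fiber g
    have hfib : (g ⁻¹' {qq}).Infinite := Set.infinite_coe_iff.mp hqq
    set q : E n := ↑qq with hqdef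
    have hqP : q ∈ P := qq.2.1
    have hfq : ∀ m ∈ g ⁻¹' {qq}, qf m = q := by
      intro m hm
      exact congrArg Subtype.val hm
    have hdzq : dist z q ≤ dist z p := by
      by_contra hcon
      push_neg at hcon
      set η : ℝ := dist z q - dist z p with hη
      have hη0 : 0 < η := by linarith
      obtain ⟨M, hM⟩ := exists_nat_gt (2 * δ * ‖y i‖ / η)
      obtain ⟨m, hmfib, hmM⟩ := hfib.exists_gt M
      have h1 : dist (w m) q < dist (w m) p := by
        have h2 := hqf2 m
        rwa [hfq m hmfib] at h2
      have t1 : dist z q ≤ dist z (w m) + dist (w m) q := dist_triangle z (w m) q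
      have t2 : dist (w m) p ≤ dist (w m) z + dist z p := dist_triangle (w m) z p
      have t3 := hwz m
      rw [dist_comm z (w m)] at t1
      have hmR : (M : ℝ) < (m : ℝ) := by exact_mod_cast hmM
      have hMR : 2 * δ * ‖y i‖ / η < (M : ℝ) := hM
      have hm1 : (0:ℝ) < (m : ℝ) + 1 := by positivity
      have hkey : 2 * δ * ‖y i‖ < η * ((m:ℝ) + 1) := by
        rw [div_lt_iff₀ hη0] at hMR
        have hMnn : (0:ℝ) ≤ (M:ℝ) := Nat.cast_nonneg M
        nlinarith
      have hwzm : dist (w m) z ≤ δ * ‖y i‖ / ((m:ℝ) + 1) := by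
        have hwmz : w m - z = (δ / (m + 1)) • y i := by rw [hw]; exact add_sub_cancel_left z _
        rw [dist_eq_norm, hwmz, norm_smul, Real.norm_eq_abs, abs_of_pos (hs0 m), div_mul_eq_mul_div]
      have : δ * ‖y i‖ / ((m:ℝ) + 1) < η / 2 := by
        rw [div_lt_div_iff₀ hm1 two_pos]
        nlinarith
      linarith
    have hdzp : dist z p ≤ dist z q := (hmemV z).mp hzV q hqP
    have heqd : dist z p = dist z q := le_antisymm hdzp hdzq
    have hinnz : ⟪z - p, q - p⟫ = (1/2) * ‖q - p‖^2 := by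
      have hexp := dist_sq_expand z p q
      rw [← heqd] at hexp
      linarith
    obtain ⟨m0, hm0fib, _⟩ := hfib.exists_gt 0
    have hyiqp : 0 < ⟪y i, q - p⟫ := by
      have h1 : dist (w m0) q < dist (w m0) p := by
        have h2 := hqf2 m0
        rwa [hfq m0 hm0fib] at h2
      rw [dist_lt_iff_inner] at h1
      have hwp : w m0 - p = (z - p) + (δ / (m0 + 1)) • y i := by rw [hw]; exact add_sub_right_comm _ _ _
      rw [hwp, inner_add_left, real_inner_smul_left, hinnz] at h1
      nlinarith [hs0 m0]
    have hhalf : ∀ u : E n, ⟪u, y i⟫ ≤ 0 → ⟪u, q - p⟫ ≤ 0 := by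
      intro u hu
      rcases eq_or_ne u 0 with rfl | hu0
      · rw [inner_zero_left]
      · have hnu : 0 < ‖u‖ := norm_pos_iff.mpr hu0
        set δ' : ℝ := ε / (‖u‖ + 1) with hδ'
        have hδ'0 : 0 < δ' := by positivity
        have hδ'u : ‖δ' • u‖ < ε := by
          rw [norm_smul, Real.norm_eq_abs, abs_of_pos hδ'0, hδ']
          rw [div_mul_eq_mul_div, div_lt_iff₀ (by positivity)]
          nlinarith
        set zz : E n := z + δ' • u with hzz
        have hzzV : zz ∈ V := by
          refine (hVSmem zz).mpr (fun j hj => ?_)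
          rcases eq_or_ne j i with rfl | hne
          · rw [hzz, inner_add_left, real_inner_smul_left, hzi]
            nlinarith
          · exact hεprop (δ' • u) hδ'u j (Finset.mem_erase.mpr ⟨hne, hj⟩)
        have h2 : dist zz p ≤ dist zz q := (hmemV zz).mp hzzV q hqP
        rw [dist_le_iff_inner] at h2
        have hzzp : zz - p = (z - p) + δ' • u := by rw [hzz]; abel
        rw [hzzp, inner_add_left, real_inner_smul_left, hinnz] at h2
        nlinarith
    set lam : ℝ := ⟪q - p, y i⟫ / ‖y i‖^2 with hlam
    have hlam0 : 0 < lam := div_pos (by rwa [real_inner_comm]) (by positivity)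
    have hqpeq : q - p = lam • y i := by
      set cvec : E n := q - p - lam • y i with hcvec
      have hca : ⟪cvec, y i⟫ = 0 := by
        rw [hcvec, inner_sub_left, real_inner_smul_left, real_inner_self_eq_norm_sq, hlam,
          div_mul_cancel₀ _ (by positivity : (‖y i‖^2 : ℝ) ≠ 0)]
        ring
      have h1 := hhalf cvec (le_of_eq hca)
      have h2 := hhalf (-cvec) (by rw [inner_neg_left, hca, neg_zero])
      rw [inner_neg_left] at h2
      have hcb : ⟪cvec, q - p⟫ = 0 := le_antisymm h1 (by linarith)
      have hcc : ⟪cvec, q - p - lam • y i⟫ = 0 := by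
        rw [inner_sub_right, real_inner_smul_right, hcb, hca]
        ring
      rw [← hcvec] at hcc
      have hc0 : cvec = 0 := inner_self_eq_zero.mp hcc
      rw [hcvec, sub_eq_zero] at hc0
      exact hc0
    have hyi : y i = lam⁻¹ • (q - p) := by
      rw [hqpeq, smul_smul, inv_mul_cancel₀ (ne_of_gt hlam0), one_smul]
    rw [hyi]
    exact coneHull_smul_mem (inv_nonneg.mpr hlam0.le) (mem_coneHull_self ⟨q, hqP, rfl⟩)
  -- final assembly
  set Ygen : Set (E n) := y '' ↑S with hYgen
  have hKclosed : IsClosed (coneHull Ygen) := isClosed_coneHull_finite _ (S.finite_toSet.image _)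
  have hKsubC : coneHull Ygen ⊆ dirCone P p := by
    refine coneHull_min ?_ (coneHull_zero_mem _)
      (fun hx hy => coneHull_add_mem hx hy) (fun ha hx => coneHull_smul_mem ha hx)
    rintro _ ⟨i, hiS, rfl⟩
    exact hyC i hiS
  have hclC : closure (dirCone P p) ⊆ coneHull Ygen := by
    intro b hb
    by_contra hbK
    set KC : ProperCone ℝ (E n) :=
      { carrier := coneHull Ygen,
        zero_mem' := coneHull_zero_mem _,
        smul_mem' := fun c x hx => coneHull_smul_mem c.2 hx,
        add_mem' := fun hx hy => coneHull_add_mem hx hy,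
        isClosed' := hKclosed } with hKC
    obtain ⟨yy, hy1, hy2⟩ :=
      ProperCone.hyperplane_separation' KC (x₀ := b) hbK
    have hyP : ∀ q' ∈ P, 0 ≤ ⟪q' - p, yy⟫ := by
      intro q' hq'
      by_contra hcon
      push_neg at hcon
      have hray : ∀ t : ℝ, 0 ≤ t → p - t • yy ∈ V := by
        intro t ht
        refine (hVSmem _).mpr fun j hj => ?_
        have h0 : 0 ≤ ⟪y j, yy⟫ :=
          hy1 (y j) (mem_coneHull_self ⟨j, by exact_mod_cast hj, rfl⟩)
        rw [inner_sub_left, real_inner_smul_left]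
        have hpj := (hVSmem p).mp hpV j hj
        have hc2 : ⟪yy, y j⟫ = ⟪y j, yy⟫ := real_inner_comm (y j) yy
        nlinarith [mul_nonneg ht h0]
      set t1 : ℝ := ((1/2) * ‖q' - p‖^2 + 1) / (-⟪q' - p, yy⟫) with ht1def
      have hnum : (0:ℝ) < (1/2) * ‖q' - p‖^2 + 1 := by positivity
      have hneg : (0:ℝ) < -⟪q' - p, yy⟫ := by linarith
      have ht10 : 0 ≤ t1 := (div_pos hnum hneg).le
      have hle := (hmemV _).mp (hray t1 ht10) q' hq'
      rw [dist_le_iff_inner] at hle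
      have hsub : p - t1 • yy - p = -(t1 • yy) := by abel
      rw [hsub, inner_neg_left, real_inner_smul_left] at hle
      have hcancel : t1 * (-⟪q' - p, yy⟫) = (1/2) * ‖q' - p‖^2 + 1 :=
        div_mul_cancel₀ _ (ne_of_gt hneg)
      have hcomm : ⟪yy, q' - p⟫ = ⟪q' - p, yy⟫ := real_inner_comm (q' - p) yy
      nlinarith
    have hCy : dirCone P p ⊆ {x : E n | 0 ≤ ⟪x, yy⟫} := by
      rintro x ⟨k', v, c, hv, hc, rfl⟩
      simp only [mem_setOf_eq, sum_inner]
      refine Finset.sum_nonneg fun j _ => ?_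
      rw [real_inner_smul_left]
      obtain ⟨q', hq', heq⟩ := hv j
      rw [← heq]
      exact mul_nonneg (hc j) (by simpa using hyP q' hq')
    have hclosed2 : IsClosed {x : E n | 0 ≤ ⟪x, yy⟫} :=
      isClosed_le continuous_const (Continuous.inner continuous_id continuous_const)
    have hb2 : 0 ≤ ⟪b, yy⟫ := closure_minimal hCy hclosed2 hb
    rw [real_inner_comm] at hb2
    linarith [real_inner_comm yy b]
  exact hnc (isClosed_of_closure_subset (fun x hx => hKsubC (hclC hx)))


end
end
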